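/- Every abelian subgroup of the dicyclic group Q_{4n} (n ≥ 1) is cyclic. -/

import Mathlib

open Subgroup QuaternionGroup

lemma zpowers_isCyclic' {G : Type*} [Group G] (g : G) :
    IsCyclic (Subgroup.zpowers g) := by
  refine ⟨⟨⟨g, Subgroup.mem_zpowers g⟩, fun x => ?_⟩⟩
  obtain ⟨k, hk⟩ := x.2
  exact ⟨k, Subtype.ext (by simpa using hk)⟩

lemma two_eq_zero_zmod {n : ℕ} (hn : 1 ≤ n) (j : ZMod (2 * n)) (h : j + j = 0) :
    j = 0 ∨ j = (n : ZMod (2 * n)) := by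
  haveI : NeZero (2 * n) := ⟨by omega⟩
  have hv : j.val < 2 * n := ZMod.val_lt j
  have hval : ((j.val : ℕ) : ZMod (2 * n)) = j := by
    simp [ZMod.natCast_val, ZMod.cast_id]
  have hc : ((2 * j.val : ℕ) : ZMod (2 * n)) = 0 := by
    push_cast
    rw [hval]
    linear_combination h
  have hd : 2 * n ∣ 2 * j.val := (ZMod.natCast_eq_zero_iff _ _).mp hc
  have hcases : j.val = 0 ∨ j.val = n := by
    rcases hd with ⟨c, hcc⟩
    rcases Nat.lt_or_ge c 2 with h2 | h2
    · interval_cases c <;> omega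
    · have : 2 * n * 2 ≤ 2 * n * c := Nat.mul_le_mul_left _ h2
      omega
  rcases hcases with h0 | h0
  · left; rw [← hval, h0, Nat.cast_zero]
  · right; rw [← hval, h0]

/-- Every abelian subgroup of the dicyclic group `Q_{4n}` (n ≥ 1) is cyclic. -/
theorem quaternionGroup_abelian_subgroup_isCyclic (n : ℕ) (hn : 1 ≤ n)
    (H : Subgroup (QuaternionGroup n)) (hH : ∀ x y : H, x * y = y * x) :
    IsCyclic H := by
  haveI : NeZero (2 * n) := ⟨by omega⟩
  by_cases hx : ∀ g ∈ H, ∃ i : ZMod (2 * n), g = a i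
  · haveI := zpowers_isCyclic' (a 1 : QuaternionGroup n)
    refine Subgroup.isCyclic_of_le (H' := Subgroup.zpowers (a 1 : QuaternionGroup n)) ?_
    intro g hg
    obtain ⟨i, rfl⟩ := hx g hg
    refine ⟨(i.val : ℤ), ?_⟩
    simp only [zpow_natCast, a_one_pow]
    congr 1
    simp [ZMod.natCast_val, ZMod.cast_id]
  · push_neg at hx
    obtain ⟨g, hgH, hg⟩ := hx
    obtain ⟨i, rfl⟩ : ∃ i : ZMod (2 * n), g = xa i := by
      cases g with
      | a j => exact absurd rfl (hg j)
      | xa j => exact ⟨j, rfl⟩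
    haveI := zpowers_isCyclic' (xa i : QuaternionGroup n)
    refine Subgroup.isCyclic_of_le (H' := Subgroup.zpowers (xa i : QuaternionGroup n)) ?_
    intro h hh
    have hcomm : h * xa i = xa i * h :=
      congrArg Subtype.val (hH ⟨h, hh⟩ ⟨xa i, hgH⟩)
    have hnn : (n : ZMod (2 * n)) + (n : ZMod (2 * n)) = 0 := by
      rw [← Nat.cast_add, ← two_mul, ZMod.natCast_self]
    cases h with
    | a j =>
        rw [a_mul_xa, xa_mul_a] at hcomm
        have hij : i - j = i + j := by injection hcomm
        have hjj : j + j = 0 := by linear_combination -hij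
        rcases two_eq_zero_zmod hn j hjj with rfl | rfl
        · exact ⟨0, by simp⟩
        · refine ⟨2, ?_⟩
          show (xa i : QuaternionGroup n) ^ (2 : ℤ) = a (n : ZMod (2 * n))
          rw [show (2 : ℤ) = ((2 : ℕ) : ℤ) from rfl, zpow_natCast, xa_sq]
    | xa j =>
        rw [xa_mul_xa, xa_mul_xa] at hcomm
        have hij : (n : ZMod (2 * n)) + i - j = (n : ZMod (2 * n)) + j - i := by
          injection hcomm
        have hd : (j - i) + (j - i) = 0 := by linear_combination -hij
        rcases two_eq_zero_zmod hn (j - i) hd with h0 | h0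
        · have hj : j = i := by linear_combination h0
          exact ⟨1, by simp [hj]⟩
        · have hj : j = i + (n : ZMod (2 * n)) := by linear_combination h0
          refine ⟨3, ?_⟩
          show (xa i : QuaternionGroup n) ^ (3 : ℤ) = xa j
          have h3 : (xa i : QuaternionGroup n) ^ (3 : ℤ) = xa (i + (n : ZMod (2 * n))) := by
            rw [show (3 : ℤ) = ((3 : ℕ) : ℤ) from rfl, zpow_natCast, pow_succ, xa_sq, a_mul_xa]
            congr 1
            linear_combination -hnn
          rw [h3, hj]
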